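/- Let (ξ_n)_{n≥1} be independent, identically distributed, integrable, integer-valued random variables with ξ_1 ≤ 1 almost surely and μ := 𝔼[ξ_1] > 0. Let S_n = ξ_1 + ⋯ + ξ_n. Then the probability that S_n ≥ 1 for all n ≥ 1 equals μ. -/

import Mathlib

open MeasureTheory ProbabilityTheory

section SkipFreeProof
open Filter Finset Topology


/-- If `a n / n → μ ≥ 0` and `a 0 = 0`, then the running maximum divided by `n` tends to `μ`. -/
lemma skipfree_max_div_tendsto (a : ℕ → ℝ) (μ : ℝ) (hμ : 0 ≤ μ) (h0 : a 0 = 0)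
    (h : Tendsto (fun n : ℕ => a n / n) atTop (𝓝 μ)) :
    Tendsto (fun N : ℕ => ((Finset.range (N + 1)).sup' Finset.nonempty_range_add_one a) / N)
      atTop (𝓝 μ) := by
  rw [Metric.tendsto_atTop] at h ⊢
  intro ε hε
  obtain ⟨n₁, hn₁⟩ := h (ε / 2) (by linarith)
  set C : ℝ := (Finset.range (n₁ + 1)).sup' Finset.nonempty_range_add_one a with hC
  obtain ⟨N₂, hN₂⟩ := exists_nat_gt (C / (μ + ε / 2))
  refine ⟨max (max n₁ N₂) 1, fun N hN => ?_⟩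
  have hN1 : 1 ≤ N := le_trans (le_max_right _ 1) hN
  have hNn₁ : n₁ ≤ N := le_trans (le_trans (le_max_left _ _) (le_max_left _ 1)) hN
  have hNN₂ : N₂ ≤ N := le_trans (le_trans (le_max_right _ _) (le_max_left _ 1)) hN
  have hNpos : (0:ℝ) < N := by exact_mod_cast hN1
  set M : ℝ := (Finset.range (N + 1)).sup' Finset.nonempty_range_add_one a with hM
  have hub : M ≤ N * (μ + ε / 2) := by
    apply Finset.sup'_le
    intro k hk
    rw [Finset.mem_range] at hk
    by_cases hkn : k ≤ n₁
    · have hCk : a k ≤ C := Finset.le_sup' a (by simp only [Finset.mem_range]; omega)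
      have hC' : C < N₂ * (μ + ε / 2) := by
        rw [div_lt_iff₀ (by linarith)] at hN₂; linarith
      have hN₂N : (N₂ : ℝ) ≤ N := by exact_mod_cast hNN₂
      nlinarith
    · push_neg at hkn
      have hd := hn₁ k hkn.le
      have hkpos : (0:ℝ) < k := by
        have : 0 < k := lt_of_le_of_lt (Nat.zero_le n₁) hkn
        exact_mod_cast this
      rw [Real.dist_eq, abs_lt] at hd
      have : a k / k < μ + ε / 2 := by linarith
      rw [div_lt_iff₀ hkpos] at this
      have hkN : (k:ℝ) ≤ N := by exact_mod_cast Nat.le_of_lt_succ hk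
      nlinarith
  have hlb : N * (μ - ε / 2) ≤ M := by
    have hMa : a N ≤ M := Finset.le_sup' a (by simp)
    have hd := hn₁ N hNn₁
    rw [Real.dist_eq, abs_lt] at hd
    have : μ - ε / 2 < a N / N := by linarith
    rw [lt_div_iff₀ hNpos] at this
    linarith
  rw [Real.dist_eq, abs_lt]
  constructor
  · have h1 : N * (μ - ε) < M := lt_of_lt_of_le (by nlinarith) hlb
    rw [lt_sub_iff_add_lt, lt_div_iff₀ hNpos]
    nlinarith
  · rw [sub_lt_iff_lt_add, div_lt_iff₀ hNpos]
    calc M ≤ N * (μ + ε/2) := hub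
      _ < (ε + μ) * N := by nlinarith [mul_pos hNpos (half_pos hε)]


/-- Counting ladder epochs for a skip-free path: the running max equals the number of
strict ladder epochs. -/
lemma skipfree_count (a : ℕ → ℤ) (h0 : a 0 = 0) (hstep : ∀ i, a (i + 1) ≤ a i + 1) (N : ℕ) :
    (Finset.range (N + 1)).sup' Finset.nonempty_range_add_one a
      = ∑ n ∈ Finset.range N, (if ∀ k < n + 1, a k < a (n + 1) then (1 : ℤ) else 0) := by
  induction N with
  | zero => simpa using h0
  | succ N ih =>
    rw [Finset.sum_range_succ, ← ih]
    set M := (Finset.range (N + 1)).sup' Finset.nonempty_range_add_one a with hMdef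
    have hsplit : (Finset.range (N + 2)).sup' Finset.nonempty_range_add_one a = a (N + 1) ⊔ M := by
      rw [Finset.sup'_congr Finset.nonempty_range_add_one (Finset.range_add_one (n := N + 1))
        (fun _ _ => rfl) (g := a), Finset.sup'_insert]
    rw [hsplit]
    by_cases hgt : M < a (N + 1)
    · have hcond : ∀ k < N + 1, a k < a (N + 1) := fun k hk =>
        lt_of_le_of_lt (Finset.le_sup' a (Finset.mem_range.2 hk)) hgt
      have h1 : a (N + 1) ≤ M + 1 := le_trans (hstep N)
        (by have : a N ≤ M := Finset.le_sup' a (by simp); omega)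
      have h2 : M + 1 ≤ a (N + 1) := by omega
      rw [if_pos hcond, sup_eq_left.2 (by omega : M ≤ a (N + 1))]
      omega
    · push_neg at hgt
      obtain ⟨k, hk, hke⟩ := Finset.exists_mem_eq_sup' Finset.nonempty_range_add_one a
        (s := Finset.range (N + 1))
      have hcond : ¬ ∀ k < N + 1, a k < a (N + 1) := by
        push_neg
        exact ⟨k, Finset.mem_range.1 hk, by omega⟩
      rw [if_neg hcond, sup_eq_right.2 hgt, add_zero]


set_option linter.unusedSectionVars false
namespace SkipFreeAux

def fext (n : ℕ) (x : Fin n → ℤ) (i : ℕ) : ℤ := if h : i < n then x ⟨i, h⟩ else 0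

variable {Ω : Type} [MeasureSpace Ω]

def cell (ξ : ℕ → Ω → ℤ) (n : ℕ) (x : Fin n → ℤ) : Set Ω :=
  {ω | ∀ i < n, ξ i ω = fext n x i}

lemma cell_eq (ξ : ℕ → Ω → ℤ) (n : ℕ) (x : Fin n → ℤ) :
    cell ξ n x = ⋂ i ∈ Finset.range n, ξ i ⁻¹' {fext n x i} := by
  ext ω
  simp [cell, Set.mem_iInter]

lemma cell_measurable (ξ : ℕ → Ω → ℤ) (hmeas : ∀ n, Measurable (ξ n)) (n : ℕ)
    (x : Fin n → ℤ) : MeasurableSet (cell ξ n x) := by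
  rw [cell_eq]
  exact MeasurableSet.biInter (Finset.range n).countable_toSet
    (fun i _ => (hmeas i) (measurableSet_singleton _))

lemma sum_cell (ξ : ℕ → Ω → ℤ) (n : ℕ) (x : Fin n → ℤ) (ω : Ω) (hω : ω ∈ cell ξ n x)
    (m : ℕ) (hm : m ≤ n) :
    (∑ i ∈ Finset.range m, ξ i ω) = ∑ i ∈ Finset.range m, fext n x i :=
  Finset.sum_congr rfl fun i hi => hω i (by rw [Finset.mem_range] at hi; omega)

lemma mem_cell_self (ξ : ℕ → Ω → ℤ) (n : ℕ) (ω : Ω) :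
    ω ∈ cell ξ n (fun i : Fin n => ξ i ω) := by
  intro i hi
  simp [fext, hi]

lemma cell_disjoint (ξ : ℕ → Ω → ℤ) (n : ℕ) {x y : Fin n → ℤ} (hxy : x ≠ y) :
    Disjoint (cell ξ n x) (cell ξ n y) := by
  rw [Set.disjoint_left]
  intro ω hx hy
  apply hxy
  funext i
  have h1 := hx i.1 i.2
  have h2 := hy i.1 i.2
  have h3 : fext n x i.1 = fext n y i.1 := h1 ▸ h2 ▸ rfl
  simpa [fext, i.2] using h3

lemma event_eq_union (ξ : ℕ → Ω → ℤ) (n : ℕ) (p : (ℕ → ℤ) → Prop)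
    (hp : ∀ y z : ℕ → ℤ, (∀ i < n, y i = z i) → (p y ↔ p z)) :
    {ω : Ω | p (fun i => ξ i ω)}
      = ⋃ (x : Fin n → ℤ) (_ : p (fext n x)), cell ξ n x := by
  ext ω
  simp only [Set.mem_setOf_eq, Set.mem_iUnion]
  constructor
  · intro hω
    refine ⟨fun i : Fin n => ξ i ω, ?_, mem_cell_self ξ n ω⟩
    rw [hp _ (fun i => ξ i ω) (fun i hi => by simp [fext, hi])]
    exact hω
  · rintro ⟨x, hpx, hx⟩
    rw [hp _ (fext n x) (fun i hi => hx i hi)]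
    exact hpx

lemma prob_union [IsProbabilityMeasure (ℙ : Measure Ω)] (ξ : ℕ → Ω → ℤ)
    (hmeas : ∀ n, Measurable (ξ n)) (n : ℕ) (q : (Fin n → ℤ) → Prop) :
    ℙ (⋃ (x : Fin n → ℤ) (_ : q x), cell ξ n x)
      = ∑' x : Fin n → ℤ, ℙ (⋃ (_ : q x), cell ξ n x) := by
  refine measure_iUnion ?_ (fun x => MeasurableSet.iUnion
    (fun _ => cell_measurable ξ hmeas n x))
  intro x y hxy
  dsimp only [Function.onFun]
  have hd := cell_disjoint ξ n hxy
  exact Disjoint.mono (Set.iUnion_subset fun _ => le_rfl)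
    (Set.iUnion_subset fun _ => le_rfl) hd

variable [IsProbabilityMeasure (ℙ : Measure Ω)]

lemma cell_prob (ξ : ℕ → Ω → ℤ) (hmeas : ∀ n, Measurable (ξ n))
    (hindep : iIndepFun ξ ℙ)
    (hident : ∀ n, IdentDistrib (ξ n) (ξ 0) ℙ ℙ) (n : ℕ) (x : Fin n → ℤ) :
    ℙ (cell ξ n x) = ∏ i ∈ Finset.range n, ℙ (ξ 0 ⁻¹' {fext n x i}) := by
  rw [cell_eq]
  rw [(iIndepFun_iff_measure_inter_preimage_eq_mul.1 hindep) (Finset.range n)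
    (fun i _ => measurableSet_singleton (fext n x i))]
  refine Finset.prod_congr rfl fun i _ => ?_
  rw [← Measure.map_apply (hmeas i) (measurableSet_singleton _),
    ← Measure.map_apply (hmeas 0) (measurableSet_singleton _), (hident i).map_eq]

lemma fext_rev (n : ℕ) (x : Fin n → ℤ) (i : ℕ) (hi : i < n) :
    fext n (x ∘ Fin.rev) i = fext n x (n - 1 - i) := by
  have h2 : n - 1 - i < n := by omega
  have h3 : (Fin.rev ⟨i, hi⟩ : Fin n) = ⟨n - 1 - i, h2⟩ := by
    apply Fin.ext
    rw [Fin.val_rev]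
    show n - (i + 1) = n - 1 - i
    omega
  simp only [fext, dif_pos hi, dif_pos h2, Function.comp_apply, h3]

/-- Time-reversal identity for i.i.d. sequences. -/
lemma reversal (ξ : ℕ → Ω → ℤ) (hmeas : ∀ n, Measurable (ξ n))
    (hindep : iIndepFun ξ ℙ)
    (hident : ∀ n, IdentDistrib (ξ n) (ξ 0) ℙ ℙ) (n : ℕ) :
    ℙ {ω | ∀ k < n, (∑ i ∈ Finset.range k, ξ i ω) < ∑ i ∈ Finset.range n, ξ i ω}
      = ℙ {ω | ∀ j < n, 1 ≤ ∑ i ∈ Finset.range (j + 1), ξ i ω} := by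
  classical
  set pQ : (ℕ → ℤ) → Prop :=
    fun y => ∀ k < n, (∑ i ∈ Finset.range k, y i) < ∑ i ∈ Finset.range n, y i with hpQ
  set pP : (ℕ → ℤ) → Prop :=
    fun y => ∀ j < n, 1 ≤ ∑ i ∈ Finset.range (j + 1), y i with hpP
  have hQdep : ∀ y z : ℕ → ℤ, (∀ i < n, y i = z i) → (pQ y ↔ pQ z) := by
    intro y z h
    have hs : ∀ m ≤ n, (∑ i ∈ Finset.range m, y i) = ∑ i ∈ Finset.range m, z i := by
      intro m hm
      exact Finset.sum_congr rfl fun i hi => h i (by rw [Finset.mem_range] at hi; omega)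
    constructor <;> intro hq k hk
    · rw [← hs k (by omega), ← hs n le_rfl]; exact hq k hk
    · rw [hs k (by omega), hs n le_rfl]; exact hq k hk
  have hPdep : ∀ y z : ℕ → ℤ, (∀ i < n, y i = z i) → (pP y ↔ pP z) := by
    intro y z h
    have hs : ∀ m ≤ n, (∑ i ∈ Finset.range m, y i) = ∑ i ∈ Finset.range m, z i := by
      intro m hm
      exact Finset.sum_congr rfl fun i hi => h i (by rw [Finset.mem_range] at hi; omega)
    constructor <;> intro hq j hj
    · rw [← hs (j + 1) (by omega)]; exact hq j hj
    · rw [hs (j + 1) (by omega)]; exact hq j hj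
  have hQ : {ω : Ω | ∀ k < n, (∑ i ∈ Finset.range k, ξ i ω) < ∑ i ∈ Finset.range n, ξ i ω}
      = ⋃ (x : Fin n → ℤ) (_ : pQ (fext n x)), cell ξ n x := event_eq_union ξ n pQ hQdep
  have hP : {ω : Ω | ∀ j < n, 1 ≤ ∑ i ∈ Finset.range (j + 1), ξ i ω}
      = ⋃ (x : Fin n → ℤ) (_ : pP (fext n x)), cell ξ n x := event_eq_union ξ n pP hPdep
  rw [hQ, hP, prob_union ξ hmeas n (fun x => pQ (fext n x)),
    prob_union ξ hmeas n (fun x => pP (fext n x))]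
  set e : (Fin n → ℤ) ≃ (Fin n → ℤ) := Equiv.arrowCongr Fin.revPerm (Equiv.refl ℤ) with he
  rw [← Equiv.tsum_eq e (fun x => ℙ (⋃ (_ : pP (fext n x)), cell ξ n x))]
  congr 1
  funext x
  have hex : ∀ i < n, fext n (e x) i = fext n x (n - 1 - i) := by
    intro i hi
    have hco : e x = x ∘ Fin.rev := by
      funext j
      simp [he, Equiv.arrowCongr, Fin.revPerm]
    rw [hco, fext_rev n x i hi]
  -- the key sum identity
  have key : ∀ j < n,
      (∑ i ∈ Finset.range (j + 1), fext n (e x) i)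
        = (∑ i ∈ Finset.range n, fext n x i)
          - ∑ i ∈ Finset.range (n - (j + 1)), fext n x i := by
    intro j hj
    have h1 : (∑ i ∈ Finset.range (j + 1), fext n (e x) i)
        = ∑ i ∈ Finset.range (j + 1), fext n x (n - (j + 1) + i) := by
      rw [← Finset.sum_range_reflect (fun i => fext n x (n - (j + 1) + i)) (j + 1)]
      refine Finset.sum_congr rfl fun i hi => ?_
      rw [Finset.mem_range] at hi
      rw [hex i (by omega)]
      congr 1
      omega
    have h2 := Finset.sum_Ico_eq_sum_range (f := fext n x) (m := n - (j + 1)) (n := n)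
    rw [show n - (n - (j + 1)) = j + 1 by omega] at h2
    rw [h1, ← h2, Finset.sum_Ico_eq_sub (fext n x) (by omega : n - (j + 1) ≤ n)]
  have hiff : pP (fext n (e x)) ↔ pQ (fext n x) := by
    constructor
    · intro h k hk
      have h2 := h (n - 1 - k) (by omega)
      rw [key _ (by omega), show n - (n - 1 - k + 1) = k by omega] at h2
      omega
    · intro h j hj
      rw [key j hj]
      have h2 := h (n - (j + 1)) (by omega)
      omega
  have hcrev : ℙ (cell ξ n (e x)) = ℙ (cell ξ n x) := by
    rw [cell_prob ξ hmeas hindep hident n (e x), cell_prob ξ hmeas hindep hident n x]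
    calc (∏ i ∈ Finset.range n, ℙ (ξ 0 ⁻¹' {fext n (e x) i}))
        = ∏ i ∈ Finset.range n, ℙ (ξ 0 ⁻¹' {fext n x (n - 1 - i)}) :=
          Finset.prod_congr rfl fun i hi => by rw [hex i (Finset.mem_range.1 hi)]
      _ = ∏ i ∈ Finset.range n, ℙ (ξ 0 ⁻¹' {fext n x i}) :=
          Finset.prod_range_reflect (fun i => ℙ (ξ 0 ⁻¹' {fext n x i})) n
  rw [Set.iUnion_eq_if, Set.iUnion_eq_if]
  by_cases h : pQ (fext n x)
  · rw [if_pos h, if_pos (hiff.2 h)]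
    exact hcrev.symm
  · rw [if_neg h, if_neg (fun hh => h (hiff.1 hh))]

end SkipFreeAux


/-- For an upward skip-free random walk with i.i.d. integrable integer increments
bounded above by `1` and positive mean `μ`, the probability that the walk stays
at least `1` forever (i.e. `S_n ≥ 1` for all `n ≥ 1`) equals `μ`.
(Here the increments are indexed from `0`, so `S_n = ξ 0 + ⋯ + ξ (n-1)`.) -/
theorem skip_free_ladder_probability (Ω : Type) [MeasureSpace Ω]
    [IsProbabilityMeasure (ℙ : Measure Ω)]
    (ξ : ℕ → Ω → ℤ) (hmeas : ∀ n, Measurable (ξ n))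
    (hindep : iIndepFun ξ ℙ)
    (hident : ∀ n, IdentDistrib (ξ n) (ξ 0) ℙ ℙ)
    (hint : Integrable (fun ω => (ξ 0 ω : ℝ)) ℙ)
    (hbdd : ∀ᵐ ω ∂(ℙ : Measure Ω), ξ 0 ω ≤ 1)
    (μ : ℝ) (hμ : μ = ∫ ω, (ξ 0 ω : ℝ) ∂ℙ) (hμpos : 0 < μ) :
    ℙ {ω : Ω | ∀ n : ℕ, 1 ≤ ∑ i ∈ Finset.range (n + 1), ξ i ω}
      = ENNReal.ofReal μ := by
  classical
  set S : ℕ → Ω → ℤ := fun n ω => ∑ i ∈ Finset.range n, ξ i ω with hS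
  have hmeasS : ∀ n, Measurable (S n) :=
    fun n => Finset.measurable_sum (Finset.range n) (fun i _ => hmeas i)
  -- the events
  set A : Set Ω := {ω | ∀ n : ℕ, 1 ≤ S (n + 1) ω} with hA
  set B : ℕ → Set Ω := fun m => {ω | ∀ j < m, 1 ≤ S (j + 1) ω} with hB
  set L : ℕ → Set Ω := fun m => {ω | ∀ k < m, S k ω < S m ω} with hL
  have hBmeas : ∀ m, MeasurableSet (B m) := by
    intro m
    have : B m = ⋂ (j : ℕ) (_ : j < m), (S (j + 1)) ⁻¹' (Set.Ici 1) := by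
      ext ω; simp [hB, Set.mem_iInter]
    rw [this]
    exact MeasurableSet.iInter fun j => MeasurableSet.iInter fun _ =>
      (hmeasS (j + 1)) measurableSet_Ici
  have hLmeas : ∀ m, MeasurableSet (L m) := by
    intro m
    have : L m = ⋂ (k : ℕ) (_ : k < m), {ω | S k ω < S m ω} := by
      ext ω; simp [hL, Set.mem_iInter]
    rw [this]
    refine MeasurableSet.iInter fun k => MeasurableSet.iInter fun _ => ?_
    exact measurableSet_lt (hmeasS k) (hmeasS m)
  -- almost sure bound on all increments
  have hG : ∀ᵐ ω ∂(ℙ : Measure Ω), ∀ i, ξ i ω ≤ 1 := by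
    rw [ae_all_iff]
    intro i
    have hms : MeasurableSet {x : ℤ | ¬ x ≤ 1} := (Set.to_countable _).measurableSet
    have h0 : ℙ {ω | ¬ ξ i ω ≤ 1} = ℙ {ω | ¬ ξ 0 ω ≤ 1} := by
      have e1 : {ω | ¬ ξ i ω ≤ 1} = ξ i ⁻¹' {x : ℤ | ¬ x ≤ 1} := rfl
      have e2 : {ω | ¬ ξ 0 ω ≤ 1} = ξ 0 ⁻¹' {x : ℤ | ¬ x ≤ 1} := rfl
      rw [e1, e2, ← Measure.map_apply (hmeas i) hms, ← Measure.map_apply (hmeas 0) hms,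
        (hident i).map_eq]
    rw [ae_iff] at hbdd ⊢
    rw [h0]
    exact hbdd
  -- convergence of ℙ (B m) to ℙ A
  have hAB : A = ⋂ m, B m := by
    ext ω
    simp only [hA, hB, Set.mem_setOf_eq, Set.mem_iInter]
    exact ⟨fun h m j hj => h j, fun h n => h (n + 1) n (by omega)⟩
  have hBanti : Antitone B := fun m m' hmm' ω hω j hj => hω j (by omega)
  have hBtendsto : Tendsto (fun m => ℙ (B m)) atTop (𝓝 (ℙ A)) := by
    rw [hAB]
    exact tendsto_measure_iInter_atTop (fun m => (hBmeas m).nullMeasurableSet) hBanti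
      ⟨0, measure_ne_top _ _⟩
  set qr : ℝ := (ℙ A).toReal with hqr
  have hqtend : Tendsto (fun m => (ℙ (B m)).toReal) atTop (𝓝 qr) :=
    (ENNReal.tendsto_toReal (measure_ne_top _ _)).comp hBtendsto
  -- the running maximum
  set MZ : ℕ → Ω → ℤ :=
    fun N ω => (Finset.range (N + 1)).sup' Finset.nonempty_range_add_one (fun k => S k ω) with hMZ
  have hMZmeas : ∀ N, Measurable (MZ N) := by
    intro N
    have : MZ N = (Finset.range (N + 1)).sup' Finset.nonempty_range_add_one S := by
      funext ω
      rw [hMZ, Finset.sup'_apply]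
    rw [this]
    exact Finset.measurable_sup' _ (fun k _ => hmeasS k)
  -- counting identity
  have hcount : ∀ᵐ ω ∂(ℙ : Measure Ω), ∀ N, (MZ N ω : ℝ)
      = ∑ n ∈ Finset.range N, (L (n + 1)).indicator (fun _ => (1 : ℝ)) ω := by
    filter_upwards [hG] with ω hGω N
    have hstep : ∀ i, S (i + 1) ω ≤ S i ω + 1 := by
      intro i
      rw [hS]
      simp only [Finset.sum_range_succ]
      have := hGω i
      omega
    have h0 : S 0 ω = 0 := by simp [hS]
    have hkey : MZ N ω
        = ∑ n ∈ Finset.range N, (if ∀ k < n + 1, S k ω < S (n + 1) ω then (1 : ℤ) else 0) :=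
      skipfree_count (fun k => S k ω) h0 hstep N
    rw [hkey]
    push_cast
    refine Finset.sum_congr rfl fun n _ => ?_
    rw [Set.indicator_apply]
    have : ω ∈ L (n + 1) ↔ ∀ k < n + 1, S k ω < S (n + 1) ω := Iff.rfl
    by_cases h : ∀ k < n + 1, S k ω < S (n + 1) ω
    · rw [if_pos h, if_pos (this.2 h)]
    · rw [if_neg h, if_neg (fun hh => h (this.1 hh))]
  -- integral of the running maximum
  have hip : ∀ N, ∫ ω, (MZ N ω : ℝ) ∂ℙ = ∑ n ∈ Finset.range N, (ℙ (B (n + 1))).toReal := by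
    intro N
    have h1 : ∫ ω, (MZ N ω : ℝ) ∂ℙ
        = ∫ ω, (∑ n ∈ Finset.range N, (L (n + 1)).indicator (fun _ => (1 : ℝ)) ω) ∂ℙ := by
      refine integral_congr_ae ?_
      filter_upwards [hcount] with ω hc using hc N
    rw [h1, integral_finset_sum _ (fun n _ =>
      (integrable_const (1 : ℝ)).indicator (hLmeas (n + 1)))]
    refine Finset.sum_congr rfl fun n _ => ?_
    rw [integral_indicator_const (1 : ℝ) (hLmeas (n + 1)), smul_eq_mul, mul_one]
    rw [measureReal_def]
    congr 1
    exact SkipFreeAux.reversal ξ hmeas hindep hident (n + 1)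
  -- strong law of large numbers
  have hslln : ∀ᵐ ω ∂(ℙ : Measure Ω),
      Tendsto (fun n : ℕ => ((S n ω : ℤ) : ℝ) / n) atTop (𝓝 μ) := by
    have hindep' : Pairwise (Function.onFun (IndepFun · · (ℙ : Measure Ω)) (fun i ω => (ξ i ω : ℝ))) :=
      fun i j hij => (hindep.indepFun hij).comp measurable_from_top measurable_from_top
    have hident' : ∀ i, IdentDistrib (fun ω => (ξ i ω : ℝ)) (fun ω => (ξ 0 ω : ℝ)) ℙ ℙ :=
      fun i => (hident i).comp measurable_from_top
    have h := strong_law_ae (fun i ω => (ξ i ω : ℝ)) hint hindep' hident'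
    filter_upwards [h] with ω hω
    have : (∫ ω, (ξ 0 ω : ℝ) ∂ℙ) = μ := hμ.symm
    rw [this] at hω
    convert hω using 2 with n
    rw [smul_eq_mul, inv_mul_eq_div, hS]
    push_cast
    rfl
  -- a.e. convergence of MZ N / N to μ
  have hFlim : ∀ᵐ ω ∂(ℙ : Measure Ω),
      Tendsto (fun N : ℕ => (MZ N ω : ℝ) / N) atTop (𝓝 μ) := by
    filter_upwards [hslln] with ω hω
    have h0 : ((S 0 ω : ℤ) : ℝ) = 0 := by simp [hS]
    have := skipfree_max_div_tendsto (fun k => ((S k ω : ℤ) : ℝ)) μ hμpos.le h0 hω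
    convert this using 2 with N
    rw [hMZ]
    rw [Finset.comp_sup'_eq_sup'_comp Finset.nonempty_range_add_one
      (fun z : ℤ => (z : ℝ)) (fun x y => by simp [Int.cast_max])]
    rfl
  -- uniform bound
  have hFbdd : ∀ N, ∀ᵐ ω ∂(ℙ : Measure Ω), ‖(MZ N ω : ℝ) / N‖ ≤ 1 := by
    intro N
    filter_upwards [hG] with ω hGω
    have hSle : ∀ k, S k ω ≤ k := by
      intro k
      rw [hS]
      calc (∑ i ∈ Finset.range k, ξ i ω) ≤ ∑ _i ∈ Finset.range k, 1 :=
            Finset.sum_le_sum (fun i _ => hGω i)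
        _ = k := by simp
    have h1 : 0 ≤ MZ N ω := by
      have : S 0 ω ≤ MZ N ω := Finset.le_sup' (fun k => S k ω) (by simp)
      simpa [hS] using this
    have h2 : MZ N ω ≤ N := by
      rw [hMZ]
      refine Finset.sup'_le _ _ fun k hk => ?_
      rw [Finset.mem_range] at hk
      calc S k ω ≤ k := hSle k
        _ ≤ N := by omega
    rw [Real.norm_eq_abs, abs_div, abs_of_nonneg (by exact_mod_cast h1),
      abs_of_nonneg (Nat.cast_nonneg N)]
    exact div_le_one_of_le₀ (by exact_mod_cast h2) (Nat.cast_nonneg N)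
  -- dominated convergence
  have hdom : Tendsto (fun N => ∫ ω, (MZ N ω : ℝ) / N ∂ℙ) atTop (𝓝 μ) := by
    have := tendsto_integral_of_dominated_convergence (bound := fun _ => (1 : ℝ))
      (F := fun N ω => (MZ N ω : ℝ) / N) (f := fun _ => μ)
      (fun N => ((measurable_from_top.comp (hMZmeas N)).div_const _).aestronglyMeasurable)
      (integrable_const 1) hFbdd hFlim
    simpa using this
  -- identify the integrals
  have hieq : ∀ N : ℕ, ∫ ω, (MZ N ω : ℝ) / N ∂ℙ
      = (N : ℝ)⁻¹ * ∑ n ∈ Finset.range N, (ℙ (B (n + 1))).toReal := by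
    intro N
    rw [integral_div, hip N, div_eq_inv_mul]
  -- Cesàro
  have hqshift : Tendsto (fun n : ℕ => (ℙ (B (n + 1))).toReal) atTop (𝓝 qr) :=
    hqtend.comp (tendsto_add_atTop_nat 1)
  have hcesaro : Tendsto (fun N : ℕ => (N : ℝ)⁻¹ * ∑ n ∈ Finset.range N, (ℙ (B (n + 1))).toReal)
      atTop (𝓝 qr) := hqshift.cesaro
  have hfinal : qr = μ := by
    refine tendsto_nhds_unique ?_ hdom
    have : (fun N => ∫ ω, (MZ N ω : ℝ) / N ∂ℙ)
        = fun N : ℕ => (N : ℝ)⁻¹ * ∑ n ∈ Finset.range N, (ℙ (B (n + 1))).toReal := funext hieq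
    rw [this]
    exact hcesaro
  have : ℙ A = ENNReal.ofReal qr := (ENNReal.ofReal_toReal (measure_ne_top _ _)).symm
  rw [hfinal] at this
  exact this


end SkipFreeProof
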